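/- arXiv:2103.16277 — 2 statements merged into one kernel-verified Lean document; each statement's English description precedes it below -/
import Mathlib

section
/- Let P be a d×d real symmetric orthogonal projector (P = P², P = Pᵀ, P positive semidefinite) and let θ be a d×d symmetric positive definite matrix. Then P θ⁻¹ P ⪰ (P θ P)†, where ⪰ denotes the Loewner order and † the Moore–Penrose pseudoinverse. -/
open Matrix

/-- The four Penrose conditions characterizing the Moore–Penrose pseudoinverse `B` of `A`. -/
def IsMoorePenrose {d : ℕ} (A B : Matrix (Fin d) (Fin d) ℝ) : Prop :=
  A * B * A = A ∧ B * A * B = B ∧ (A * B)ᵀ = A * B ∧ (B * A)ᵀ = B * A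

/-- Uniqueness of the Moore–Penrose pseudoinverse. -/
theorem mp_unique {d : ℕ} {A B C : Matrix (Fin d) (Fin d) ℝ}
    (hB : IsMoorePenrose A B) (hC : IsMoorePenrose A C) : B = C := by
  obtain ⟨hB1, hB2, hB3, hB4⟩ := hB
  obtain ⟨hC1, hC2, hC3, hC4⟩ := hC
  have hAB : A * B = A * C := by
    calc A * B = (A * B)ᵀ := hB3.symm
    _ = ((A * C * A) * B)ᵀ := by rw [hC1]
    _ = (A * B)ᵀ * (A * C)ᵀ := by
        rw [← transpose_mul]; noncomm_ring
    _ = (A * B) * (A * C) := by rw [hB3, hC3]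
    _ = (A * B * A) * C := by noncomm_ring
    _ = A * C := by rw [hB1]
  have hBA : B * A = C * A := by
    calc B * A = (B * A)ᵀ := hB4.symm
    _ = (B * (A * C * A))ᵀ := by rw [hC1]
    _ = (C * A)ᵀ * (B * A)ᵀ := by
        rw [← transpose_mul]; noncomm_ring
    _ = (C * A) * (B * A) := by rw [hB4, hC4]
    _ = C * (A * B * A) := by noncomm_ring
    _ = C * A := by rw [hB1]
  calc B = B * A * B := hB2.symm
  _ = B * (A * C) := by rw [mul_assoc, hAB]
  _ = (B * A) * C := by rw [mul_assoc]
  _ = C * A * C := by rw [hBA]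
  _ = C := hC2

/-- If `P` is a symmetric positive semidefinite orthogonal projector and `θ` is symmetric
positive definite, then `P θ⁻¹ P ⪰ (P θ P)†` in the Loewner order. -/
theorem stmt0 {d : ℕ} (P θ pinv : Matrix (Fin d) (Fin d) ℝ)
    (hPproj : P * P = P) (hPsym : Pᵀ = P) (hPpsd : P.PosSemidef)
    (hθ : θ.PosDef)
    (hpinv : IsMoorePenrose (P * θ * P) pinv) :
    (P * θ⁻¹ * P - pinv).PosSemidef := by
  set A : Matrix (Fin d) (Fin d) ℝ := P * θ * P with hA
  have hθsym : θᵀ = θ := hθ.isHermitian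
  have hAsym : Aᵀ = A := by
    rw [hA, transpose_mul, transpose_mul, hPsym, hθsym, mul_assoc]
  obtain ⟨h1, h2, h3, h4⟩ := hpinv
  -- rewritten symmetry conditions
  have h4' : A * pinvᵀ = pinv * A := by
    conv_lhs => rw [← hAsym]
    rw [← transpose_mul]; exact h4
  have h3' : pinvᵀ * A = A * pinv := by
    conv_lhs => rw [← hAsym]
    rw [← transpose_mul]; exact h3
  -- pinv is symmetric
  have hpinvT : IsMoorePenrose A pinvᵀ := by
    refine ⟨?_, ?_, ?_, ?_⟩
    · have := congrArg transpose h1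
      simpa [transpose_mul, hAsym, mul_assoc] using this
    · have := congrArg transpose h2
      simpa [transpose_mul, hAsym, mul_assoc] using this
    · rw [h4']; exact h4
    · rw [h3']; exact h3
  have hsym : pinvᵀ = pinv := mp_unique hpinvT ⟨h1, h2, h3, h4⟩
  have hAP : A * P = A := by rw [hA, mul_assoc, mul_assoc, hPproj, ← mul_assoc]
  have hPA : P * A = A := by rw [hA, ← mul_assoc, ← mul_assoc, hPproj]
  -- pinv * P = pinv
  have hAAp : A * pinv * P = A * pinv := by
    have hstep : P * (A * pinv) = A * pinv := by rw [← mul_assoc, hPA]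
    calc A * pinv * P = (A * pinv)ᵀ * Pᵀ := by rw [h3, hPsym]
    _ = (P * (A * pinv))ᵀ := (transpose_mul P (A * pinv)).symm
    _ = (A * pinv)ᵀ := by rw [hstep]
    _ = A * pinv := h3
  have hpP : pinv * P = pinv := by
    calc pinv * P = (pinv * A * pinv) * P := by rw [h2]
    _ = pinv * (A * pinv * P) := by rw [mul_assoc, mul_assoc, ← mul_assoc A]
    _ = pinv * (A * pinv) := by rw [hAAp]
    _ = pinv := by rw [← mul_assoc, h2]
  have hPp : P * pinv = pinv := by
    calc P * pinv = Pᵀ * pinvᵀ := by rw [hPsym, hsym]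
    _ = (pinv * P)ᵀ := (transpose_mul pinv P).symm
    _ = pinv := by rw [hpP, hsym]
  -- invertibility facts
  have hdet : IsUnit θ.det := isUnit_iff_ne_zero.mpr hθ.det_pos.ne'
  have hθi : θ * θ⁻¹ = 1 := mul_nonsing_inv θ hdet
  have hiθ : θ⁻¹ * θ = 1 := nonsing_inv_mul θ hdet
  have hθisym : θ⁻¹ᵀ = θ⁻¹ := by rw [transpose_nonsing_inv, hθsym]
  -- the key algebraic identity
  set E : Matrix (Fin d) (Fin d) ℝ := θ⁻¹ * P - P * pinv with hE
  have hET : Eᵀ = P * θ⁻¹ - pinv := by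
    rw [hE, transpose_sub, transpose_mul, transpose_mul, hPsym, hθisym, hsym, hpP]
  have key : Eᵀ * θ * E = P * θ⁻¹ * P - pinv := by
    rw [hET, hE]
    have e1 : (P * θ⁻¹ - pinv) * θ = P - pinv * θ := by
      rw [sub_mul, mul_assoc, hiθ, mul_one]
    rw [e1, sub_mul, mul_sub, mul_sub]
    have e2 : P * (θ⁻¹ * P) = P * θ⁻¹ * P := by rw [mul_assoc]
    have e3 : P * (P * pinv) = pinv := by rw [← mul_assoc, hPproj, hPp]
    have e4 : pinv * θ * (θ⁻¹ * P) = pinv := by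
      rw [mul_assoc, ← mul_assoc θ, hθi, one_mul, hpP]
    have e5 : pinv * θ * (P * pinv) = pinv := by
      have hstep : pinv * θ * (P * pinv) = pinv * A * pinv := by
        rw [hA]
        nth_rewrite 1 [← hpP]
        noncomm_ring
      rw [hstep, h2]
    rw [e2, e3, e4, e5]
    abel
  have hpsd : (Eᵀ * θ * E).PosSemidef := by
    have := hθ.posSemidef.conjTranspose_mul_mul_same E
    simpa [conjTranspose_eq_transpose_of_trivial] using this
  rwa [key] at hpsd
end

section
/- Let A, B be d×d real symmetric positive semidefinite matrices with Ran(A) ⊆ Ran(B). Then the minimum of the function θ ↦ Tr(θ† A) + Tr(θ B) over all symmetric positive semidefinite θ with Ran(A) ⊆ Ran(θ) equals 2‖B^{1/2} A^{1/2}‖_*, and it is attained at θ* = B^{†/2} (B^{1/2} A B^{1/2})^{1/2} B^{†/2}. -/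
open Matrix

open scoped ComplexOrder

/-- The positive semidefinite square root of a positive semidefinite matrix
(the definition `Matrix.PosSemidef.sqrt` of the older Mathlib, since removed). -/
noncomputable def Matrix.PosSemidef.sqrt {n : Type*} [Fintype n] [DecidableEq n] {𝕜 : Type*} [RCLike 𝕜]
    {A : Matrix n n 𝕜} (hA : A.PosSemidef) : Matrix n n 𝕜 :=
  hA.1.eigenvectorUnitary.1 * diagonal ((↑) ∘ (√·) ∘ hA.1.eigenvalues) *
    (star hA.1.eigenvectorUnitary : Matrix n n 𝕜)

section SqrtPort

open scoped MatrixOrder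

lemma Matrix.PosSemidef.sqrt_eq_cfcSqrt {n : Type*} [Fintype n] [DecidableEq n] {𝕜 : Type*}
    [RCLike 𝕜] {A : Matrix n n 𝕜} (hA : A.PosSemidef) : hA.sqrt = CFC.sqrt A := by
  rw [CFC.sqrt_eq_real_sqrt A hA.nonneg, cfcₙ_eq_cfc, hA.1.cfc_eq, IsHermitian.cfc, Unitary.conjStarAlgAut_apply]
  rfl

lemma Matrix.PosSemidef.posSemidef_sqrt {n : Type*} [Fintype n] [DecidableEq n] {𝕜 : Type*}
    [RCLike 𝕜] {A : Matrix n n 𝕜} (hA : A.PosSemidef) : hA.sqrt.PosSemidef := by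
  rw [hA.sqrt_eq_cfcSqrt]; exact (CFC.sqrt_nonneg A).posSemidef

lemma Matrix.PosSemidef.sqrt_mul_self {n : Type*} [Fintype n] [DecidableEq n] {𝕜 : Type*}
    [RCLike 𝕜] {A : Matrix n n 𝕜} (hA : A.PosSemidef) : hA.sqrt * hA.sqrt = A := by
  rw [hA.sqrt_eq_cfcSqrt]; exact CFC.sqrt_mul_sqrt_self A hA.nonneg

lemma Matrix.PosSemidef.eq_sqrt_of_sq_eq {n : Type*} [Fintype n] [DecidableEq n] {𝕜 : Type*}
    [RCLike 𝕜] {A : Matrix n n 𝕜} (hA : A.PosSemidef) {B : Matrix n n 𝕜} (hB : B.PosSemidef)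
    (hAB : A ^ 2 = B) : A = hB.sqrt := by
  rw [hB.sqrt_eq_cfcSqrt, eq_comm, CFC.sqrt_eq_iff B A hB.nonneg hA.nonneg, ← sq, hAB]

end SqrtPort

/-- The trace (nuclear) norm `‖M‖_* = Tr((Mᵀ M)^{1/2})`. -/
noncomputable def traceNorm {d : ℕ} (M : Matrix (Fin d) (Fin d) ℝ) : ℝ :=
  (Matrix.posSemidef_conjTranspose_mul_self M).sqrt.trace


section Aux

variable {d : ℕ}

lemma eq_of_mulVec_eq {M N : Matrix (Fin d) (Fin d) ℝ} (h : ∀ x, M *ᵥ x = N *ᵥ x) : M = N := by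
  ext i j
  have := congrFun (h (Pi.single j 1)) i
  simpa [mulVec_single] using this

lemma herm_t {M : Matrix (Fin d) (Fin d) ℝ} (h : M.PosSemidef) : Mᵀ = M := by
  rw [← conjTranspose_eq_transpose_of_trivial]; exact h.1

lemma herm_c {M : Matrix (Fin d) (Fin d) ℝ} (h : M.PosSemidef) : Mᴴ = M := h.1

lemma trace_nonneg' {M : Matrix (Fin d) (Fin d) ℝ} (hM : M.PosSemidef) : 0 ≤ M.trace := by
  exact hM.trace_nonneg

lemma sqrt_congr {X Y : Matrix (Fin d) (Fin d) ℝ} (hX : X.PosSemidef) (hY : Y.PosSemidef)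
    (h : X = Y) : hX.sqrt = hY.sqrt := by subst h; rfl

lemma fix_of_range {P A B : Matrix (Fin d) (Fin d) ℝ} (hPB : P * B = B)
    (hr : LinearMap.range A.mulVecLin ≤ LinearMap.range B.mulVecLin) : P * A = A := by
  apply eq_of_mulVec_eq
  intro x
  obtain ⟨y, hy⟩ := hr (LinearMap.mem_range_self _ x)
  rw [mulVecLin_apply, mulVecLin_apply] at hy
  calc (P * A) *ᵥ x = P *ᵥ (A *ᵥ x) := (mulVec_mulVec x P A).symm
    _ = P *ᵥ (B *ᵥ y) := by rw [hy]
    _ = (P * B) *ᵥ y := mulVec_mulVec y P B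
    _ = B *ᵥ y := by rw [hPB]
    _ = A *ᵥ x := hy

lemma mp_unique_s1 {A X Y : Matrix (Fin d) (Fin d) ℝ}
    (hX : IsMoorePenrose A X) (hY : IsMoorePenrose A Y) : X = Y := by
  obtain ⟨x1, x2, x3, x4⟩ := hX
  obtain ⟨y1, y2, y3, y4⟩ := hY
  have hAXY : A * X = A * Y := by
    calc A * X = (A * X)ᵀ := x3.symm
      _ = ((A * Y * A) * X)ᵀ := by rw [y1]
      _ = ((A * Y) * (A * X))ᵀ := by rw [mul_assoc (A*Y) A X]
      _ = (A * X)ᵀ * (A * Y)ᵀ := by rw [transpose_mul]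
      _ = (A * X) * (A * Y) := by rw [x3, y3]
      _ = ((A * X) * A) * Y := by rw [← mul_assoc]
      _ = A * Y := by rw [x1]
  have hXYA : X * A = Y * A := by
    calc X * A = (X * A)ᵀ := x4.symm
      _ = (X * (A * Y * A))ᵀ := by rw [y1]
      _ = ((X * A) * (Y * A))ᵀ := by rw [mul_assoc A Y A, ← mul_assoc X A (Y*A)]
      _ = (Y * A)ᵀ * (X * A)ᵀ := by rw [transpose_mul]
      _ = (Y * A) * (X * A) := by rw [x4, y4]
      _ = Y * ((A * X) * A) := by rw [mul_assoc Y A (X*A), ← mul_assoc A X A]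
      _ = Y * A := by rw [x1]
  calc X = X * A * X := x2.symm
    _ = (Y * A) * X := by rw [hXYA]
    _ = Y * (A * X) := by rw [mul_assoc]
    _ = Y * (A * Y) := by rw [hAXY]
    _ = Y := by rw [← mul_assoc, y2]

lemma exists_pinv {S : Matrix (Fin d) (Fin d) ℝ} (hS : S.PosSemidef) :
    ∃ T : Matrix (Fin d) (Fin d) ℝ, T.PosSemidef ∧ IsMoorePenrose S T ∧ S * T = T * S := by
  set U : Matrix (Fin d) (Fin d) ℝ := (hS.1.eigenvectorUnitary : Matrix (Fin d) (Fin d) ℝ) with hUdef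
  have hUU : star U * U = 1 := mem_unitaryGroup_iff'.mp hS.1.eigenvectorUnitary.2
  set lam : Fin d → ℝ := hS.1.eigenvalues with hlam
  have hspec : S = U * diagonal lam * star U := by
    have := hS.1.spectral_theorem
    simpa [RCLike.ofReal_real_eq_id] using this
  have hUU' : ∀ X : Matrix (Fin d) (Fin d) ℝ, star U * (U * X) = X := fun X => by
    rw [← mul_assoc, hUU, one_mul]
  have key : ∀ f g : Fin d → ℝ, (U * diagonal f * star U) * (U * diagonal g * star U)
      = U * diagonal (fun i => f i * g i) * star U := by
    intro f g
    simp only [mul_assoc, hUU']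
    rw [← mul_assoc (diagonal f) (diagonal g), diagonal_mul_diagonal]
  have dcongr : ∀ f g : Fin d → ℝ, (∀ i, f i = g i) →
      U * diagonal f * star U = U * diagonal g * star U := by
    intro f g h
    rw [show f = g from funext h]
  have hsymm : ∀ f : Fin d → ℝ, (U * diagonal f * star U)ᵀ = U * diagonal f * star U := by
    intro f
    ext i j
    simp only [transpose_apply, mul_apply, diagonal_apply, star_apply, star_trivial,
      Finset.mul_sum, Finset.sum_mul, ite_mul, mul_ite, zero_mul, mul_zero,
      Finset.sum_ite_eq, Finset.sum_ite_eq', Finset.mem_univ, if_true]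
    exact Finset.sum_congr rfl (fun k _ => by ring)
  refine ⟨U * diagonal (fun i => (lam i)⁻¹) * star U, ?_, ⟨?_, ?_, ?_, ?_⟩, ?_⟩
  · rw [star_eq_conjTranspose]
    exact (PosSemidef.diagonal
      (fun i => inv_nonneg.mpr (hS.eigenvalues_nonneg i))).mul_mul_conjTranspose_same U
  · rw [hspec, key, key]
    exact dcongr _ _ (fun i => by by_cases h : lam i = 0 <;> field_simp [h])
  · rw [hspec, key, key]
    exact dcongr _ _ (fun i => by by_cases h : lam i = 0 <;> field_simp [h])
  · rw [hspec, key, hsymm]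
  · rw [hspec, key, hsymm]
  · rw [hspec, key, key]
    exact dcongr _ _ (fun i => by ring)

lemma mp_sq {R T : Matrix (Fin d) (Fin d) ℝ} (h : IsMoorePenrose R T) (hc : R * T = T * R) :
    IsMoorePenrose (R * R) (T * T) := by
  obtain ⟨h1, h2, h3, h4⟩ := h
  have s1 : (R * R) * (T * T) = R * T := by
    calc R * R * (T * T) = R * (R * T * T) := by rw [mul_assoc, ← mul_assoc R T T]
      _ = R * (T * R * T) := by rw [hc]
      _ = R * T := by rw [h2]
  have s2 : (T * T) * (R * R) = R * T := by
    calc T * T * (R * R) = T * (T * R * R) := by rw [mul_assoc, ← mul_assoc T R R]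
      _ = T * (R * T * R) := by rw [← hc]
      _ = T * R := by rw [h1]
      _ = R * T := hc.symm
  refine ⟨?_, ?_, ?_, ?_⟩
  · rw [s1, ← mul_assoc, h1]
  · rw [s2, ← mul_assoc, hc, h2]
  · rw [s1]; exact h3
  · rw [s2]; exact h3

lemma trace_sqrt_swap (M : Matrix (Fin d) (Fin d) ℝ) :
    (posSemidef_conjTranspose_mul_self M).sqrt.trace
      = (posSemidef_self_mul_conjTranspose M).sqrt.trace := by
  set S := (posSemidef_conjTranspose_mul_self M).sqrt with hSdef
  have hSpsd : S.PosSemidef := PosSemidef.posSemidef_sqrt _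
  have hSS : S * S = Mᴴ * M := PosSemidef.sqrt_mul_self _
  obtain ⟨T, hT, hMP, hc⟩ := exists_pinv hSpsd
  have hSQ : S * (S * T) = S := by rw [hc, ← mul_assoc]; exact hMP.1
  have hSST : (S * S) * T = S := by rw [mul_assoc]; exact hSQ
  have hTSS : T * (S * S) = S := by rw [← mul_assoc, ← hc]; exact hMP.1
  have hQc : (S * T)ᴴ = S * T := (conjTranspose_eq_transpose_of_trivial _).trans hMP.2.2.1
  have e1 : (S * S) * (S * T) = S * S := by rw [mul_assoc S S (S * T), hSQ]
  have e2 : (S * T) * (S * S) = S * S := by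
    simp only [← mul_assoc]; rw [hMP.1]
  have hMQ : M * (S * T) = M := by
    have hz : (M - M * (S * T))ᴴ * (M - M * (S * T)) = 0 := by
      have expand : (M - M * (S * T))ᴴ * (M - M * (S * T))
          = Mᴴ * M - (Mᴴ * M) * (S * T) - (S * T) * (Mᴴ * M)
            + (S * T) * ((Mᴴ * M) * (S * T)) := by
        rw [conjTranspose_sub, conjTranspose_mul, hQc]
        noncomm_ring
      rw [expand, ← hSS, e1, e2]
      abel
    exact (sub_eq_zero.mp (conjTranspose_mul_self_eq_zero.mp hz)).symm
  set K := M * T * Mᴴ with hK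
  have hKpsd : K.PosSemidef := hT.mul_mul_conjTranspose_same M
  have hK2 : K ^ 2 = M * Mᴴ := by
    rw [pow_two, hK]
    calc (M * T * Mᴴ) * (M * T * Mᴴ) = M * (T * ((Mᴴ * M) * (T * Mᴴ))) := by
          simp only [mul_assoc]
      _ = M * (T * ((S * S) * (T * Mᴴ))) := by rw [← hSS]
      _ = M * ((T * (S * S)) * (T * Mᴴ)) := by simp only [mul_assoc]
      _ = M * (S * (T * Mᴴ)) := by rw [hTSS]
      _ = (M * (S * T)) * Mᴴ := by simp only [mul_assoc]
      _ = M * Mᴴ := by rw [hMQ]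
  have hKeq : K = (posSemidef_self_mul_conjTranspose M).sqrt :=
    hKpsd.eq_sqrt_of_sq_eq (posSemidef_self_mul_conjTranspose M) hK2
  calc S.trace = ((S * S) * T).trace := by rw [hSST]
    _ = ((Mᴴ * M) * T).trace := by rw [hSS]
    _ = (Mᴴ * (M * T)).trace := by rw [mul_assoc]
    _ = ((M * T) * Mᴴ).trace := trace_mul_comm _ _
    _ = (posSemidef_self_mul_conjTranspose M).sqrt.trace := by rw [← hK, hKeq]

lemma two_traceNorm_le (X Y : Matrix (Fin d) (Fin d) ℝ) :
    2 * traceNorm (Yᴴ * X) ≤ (Xᴴ * X).trace + (Yᴴ * Y).trace := by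
  set M := Yᴴ * X with hM
  set S := (posSemidef_conjTranspose_mul_self M).sqrt with hSdef
  have hSpsd : S.PosSemidef := PosSemidef.posSemidef_sqrt _
  have hSS : S * S = Mᴴ * M := PosSemidef.sqrt_mul_self _
  obtain ⟨T, hT, hMP, hc⟩ := exists_pinv hSpsd
  have hTc : Tᴴ = T := herm_c hT
  have hTSS : T * (S * S) = S := by rw [← mul_assoc, ← hc]; exact hMP.1
  have hSQ : S * (S * T) = S := by rw [hc, ← mul_assoc]; exact hMP.1
  have hSST : (S * S) * T = S := by rw [mul_assoc]; exact hSQ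
  set W := M * T with hW
  set G := Y * W with hG
  have hGX : Gᴴ * X = S := by
    calc Gᴴ * X = ((Tᴴ * Mᴴ) * Yᴴ) * X := by rw [hG, hW, conjTranspose_mul, conjTranspose_mul]
      _ = T * (Mᴴ * (Yᴴ * X)) := by rw [hTc]; simp only [mul_assoc]
      _ = T * (Mᴴ * M) := by rw [← hM]
      _ = T * (S * S) := by rw [← hSS]
      _ = S := hTSS
  have hXG : Xᴴ * G = S := by
    have e : Xᴴ * G = (Gᴴ * X)ᴴ := by rw [conjTranspose_mul, conjTranspose_conjTranspose]
    rw [e, hGX, herm_c hSpsd]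
  have pos1 : 0 ≤ ((G - X)ᴴ * (G - X)).trace := trace_nonneg' (posSemidef_conjTranspose_mul_self _)
  have expand1 : (G - X)ᴴ * (G - X) = Gᴴ * G - Gᴴ * X - Xᴴ * G + Xᴴ * X := by
    rw [conjTranspose_sub]; noncomm_ring
  rw [expand1, hGX, hXG] at pos1
  have tr1 : (Gᴴ * G - S - S + Xᴴ * X).trace
      = (Gᴴ * G).trace - S.trace - S.trace + (Xᴴ * X).trace := by
    simp [trace_sub, trace_add]
  rw [tr1] at pos1
  have hWc : Wᴴ = T * Mᴴ := by rw [hW, conjTranspose_mul, hTc]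
  have k1 : ∀ Z : Matrix (Fin d) (Fin d) ℝ, T * (S * (T * Z)) = T * Z := fun Z => by
    simp only [← mul_assoc]; rw [hMP.2.1]
  have k2 : ∀ Z : Matrix (Fin d) (Fin d) ℝ, S * (S * (T * Z)) = S * Z := fun Z => by
    simp only [← mul_assoc]; rw [hSST]
  have hP2 : (W * Wᴴ) * (W * Wᴴ) = W * Wᴴ := by
    calc (W * Wᴴ) * (W * Wᴴ) = M * (T * (T * ((Mᴴ * M) * (T * (T * Mᴴ))))) := by
          rw [hWc, hW]; simp only [mul_assoc]
      _ = M * (T * (T * ((S * S) * (T * (T * Mᴴ))))) := by rw [← hSS]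
      _ = M * (T * (T * (S * (S * (T * (T * Mᴴ)))))) := by simp only [mul_assoc]
      _ = M * (T * (T * (S * (T * Mᴴ)))) := by rw [k2]
      _ = M * (T * (T * Mᴴ)) := by rw [k1]
      _ = W * Wᴴ := by rw [hWc, hW]; simp only [mul_assoc]
  have hPc : (W * Wᴴ)ᴴ = W * Wᴴ := by rw [conjTranspose_mul, conjTranspose_conjTranspose]
  set N := 1 - W * Wᴴ with hN
  have hNN : N * N = N := by
    calc N * N = 1 - (W * Wᴴ) - ((W * Wᴴ) - (W * Wᴴ) * (W * Wᴴ)) := by rw [hN]; noncomm_ring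
      _ = N := by rw [hP2, hN]; simp
  have hNc : Nᴴ = N := by rw [hN, conjTranspose_sub, conjTranspose_one, hPc]
  have pos2 : 0 ≤ ((N * Yᴴ)ᴴ * (N * Yᴴ)).trace :=
    trace_nonneg' (posSemidef_conjTranspose_mul_self _)
  have expand2 : (N * Yᴴ)ᴴ * (N * Yᴴ) = Y * Yᴴ - (Y * W) * (Wᴴ * Yᴴ) := by
    calc (N * Yᴴ)ᴴ * (N * Yᴴ) = Y * (N * (N * Yᴴ)) := by
          rw [conjTranspose_mul, hNc, conjTranspose_conjTranspose]; simp only [mul_assoc]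
      _ = Y * (N * Yᴴ) := by rw [← mul_assoc N N, hNN]
      _ = Y * Yᴴ - (Y * W) * (Wᴴ * Yᴴ) := by rw [hN]; noncomm_ring
  have tr2 : ((N * Yᴴ)ᴴ * (N * Yᴴ)).trace = (Yᴴ * Y).trace - (Gᴴ * G).trace := by
    rw [expand2, trace_sub]
    congr 1
    · exact trace_mul_comm Y Yᴴ
    · have e : Gᴴ = Wᴴ * Yᴴ := by rw [hG, conjTranspose_mul]
      rw [e, hG]
      exact trace_mul_comm (Y * W) (Wᴴ * Yᴴ)
  rw [tr2] at pos2
  have hTN : traceNorm M = S.trace := rfl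
  rw [hTN]
  linarith


lemma part1 {d : ℕ} {F Ah A B θ θdag : Matrix (Fin d) (Fin d) ℝ}
    (hFpsd : F.PosSemidef) (hAhpsd : Ah.PosSemidef)
    (hFF : F * F = B) (hAhAh : Ah * Ah = A)
    (hθ : θ.PosSemidef) (hθmp : IsMoorePenrose θ θdag)
    (hRanAθ : LinearMap.range A.mulVecLin ≤ LinearMap.range θ.mulVecLin) :
    2 * traceNorm (F * Ah) ≤ (θdag * A).trace + (θ * B).trace := by
  obtain ⟨R, hRpsd, hRR⟩ : ∃ R : Matrix (Fin d) (Fin d) ℝ, R.PosSemidef ∧ R * R = θ :=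
    ⟨hθ.sqrt, hθ.posSemidef_sqrt, hθ.sqrt_mul_self⟩
  obtain ⟨Rd, hRdpsd, hRmp, hRc⟩ := exists_pinv hRpsd
  obtain ⟨Ahd, hAhdpsd, hAhmp, hAhc⟩ := exists_pinv hAhpsd
  have hAAhd : A * Ahd = Ah := by
    rw [← hAhAh, mul_assoc, hAhc]
    simp only [← mul_assoc]
    exact hAhmp.1
  have hmp2 : IsMoorePenrose θ (Rd * Rd) := by
    rw [← hRR]; exact mp_sq hRmp hRc
  have hθd : θdag = Rd * Rd := mp_unique_s1 hθmp hmp2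
  have hQθ : R * Rd * θ = θ := by
    rw [← hRR, mul_assoc]
    simp only [← mul_assoc]; rw [hRmp.1]
  have hQA : R * Rd * A = A := fix_of_range hQθ hRanAθ
  have hQAh : R * Rd * Ah = Ah := by rw [← hAAhd, ← mul_assoc, hQA]
  have hYc : (R * F)ᴴ = F * R := by
    rw [conjTranspose_mul, herm_c hFpsd, herm_c hRpsd]
  have hXc : (Rd * Ah)ᴴ = Ah * Rd := by
    rw [conjTranspose_mul, herm_c hAhpsd, herm_c hRdpsd]
  have hineq := two_traceNorm_le (Rd * Ah) (R * F)
  have hYX : (R * F)ᴴ * (Rd * Ah) = F * Ah := by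
    rw [hYc]
    calc (F * R) * (Rd * Ah) = F * (R * Rd * Ah) := by simp only [mul_assoc]
      _ = F * Ah := by rw [hQAh]
  rw [hYX, hXc, hYc] at hineq
  have hXX : ((Ah * Rd) * (Rd * Ah)).trace = (θdag * A).trace := by
    calc ((Ah * Rd) * (Rd * Ah)).trace = (Ah * ((Rd * Rd) * Ah)).trace := by
          simp only [mul_assoc]
      _ = (((Rd * Rd) * Ah) * Ah).trace := trace_mul_comm _ _
      _ = ((Rd * Rd) * (Ah * Ah)).trace := by rw [mul_assoc]
      _ = (θdag * A).trace := by rw [hAhAh, hθd]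
  have hYY : ((F * R) * (R * F)).trace = (θ * B).trace := by
    calc ((F * R) * (R * F)).trace = (F * ((R * R) * F)).trace := by simp only [mul_assoc]
      _ = (((R * R) * F) * F).trace := trace_mul_comm _ _
      _ = ((R * R) * (F * F)).trace := by rw [mul_assoc]
      _ = (θ * B).trace := by rw [hRR, hFF]
  rw [hXX, hYY] at hineq
  exact hineq

lemma part2 {d : ℕ} {F Ah C A B Fd θsd : Matrix (Fin d) (Fin d) ℝ}
    (hFpsd : F.PosSemidef) (hAhpsd : Ah.PosSemidef) (hCpsd : C.PosSemidef)
    (hA : A.PosSemidef)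
    (hFF : F * F = B) (hAhAh : Ah * Ah = A) (hCC : C * C = F * A * F)
    (hRanAB : LinearMap.range A.mulVecLin ≤ LinearMap.range B.mulVecLin)
    (hFdpsd : Fd.PosSemidef) (hFmp : IsMoorePenrose F Fd) (hFc : F * Fd = Fd * F)
    (hmpθs : IsMoorePenrose (Fd * C * Fd) θsd) :
    (θsd * A).trace + ((Fd * C * Fd) * B).trace = 2 * traceNorm (F * Ah) := by
  have c1 : ∀ Z, F * (Fd * (F * Z)) = F * Z := fun Z => by
    simp only [← mul_assoc]; rw [hFmp.1]
  have c1' : F * (Fd * F) = F := by simp only [← mul_assoc]; exact hFmp.1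
  have c2 : ∀ Z, Fd * (F * (Fd * Z)) = Fd * Z := fun Z => by
    simp only [← mul_assoc]; rw [hFmp.2.1]
  have csw : ∀ Z, Fd * (F * Z) = F * (Fd * Z) := fun Z => by
    rw [← mul_assoc, ← hFc, mul_assoc]
  have hPB : F * Fd * B = B := by rw [← hFF, mul_assoc]; exact c1 F
  have hPA : F * Fd * A = A := fix_of_range hPB hRanAB
  have hAt : Aᵀ = A := herm_t hA
  have hAP : A * (F * Fd) = A := by
    have h := congrArg transpose hPA
    rwa [transpose_mul, hFmp.2.2.1, hAt] at h
  obtain ⟨Cd, hCdpsd, hCmp, hCc⟩ := exists_pinv hCpsd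
  have hCCd : C * C * Cd = C := by
    rw [mul_assoc, hCc]
    simp only [← mul_assoc]; exact hCmp.1
  have hPC : F * Fd * C = C := by
    calc F * Fd * C = F * Fd * (C * C * Cd) := by rw [hCCd]
      _ = F * Fd * (F * A * F * Cd) := by rw [hCC]
      _ = F * A * F * Cd := by simp only [← mul_assoc]; rw [hFmp.1]
      _ = C * C * Cd := by rw [← hCC]
      _ = C := hCCd
  have hCt : Cᵀ = C := herm_t hCpsd
  have hCP : C * (F * Fd) = C := by
    have h := congrArg transpose hPC
    rwa [transpose_mul, hFmp.2.2.1, hCt] at h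
  have cP : ∀ Z, F * (Fd * (C * Z)) = C * Z := fun Z => by
    simp only [← mul_assoc]; rw [hPC]
  have pAr : ∀ Z, F * (Fd * (A * Z)) = A * Z := fun Z => by
    simp only [← mul_assoc]; rw [hPA]
  have htrB : (Fd * C * Fd * B).trace = C.trace := by
    have e : Fd * C * Fd * B = Fd * (C * F) := by
      rw [← hFF]
      simp only [mul_assoc]
      rw [csw F, c1']
    rw [e]
    calc (Fd * (C * F)).trace = ((C * F) * Fd).trace := trace_mul_comm _ _
      _ = (C * (F * Fd)).trace := by rw [mul_assoc]
      _ = C.trace := by rw [hCP]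
  have hθBθ : Fd * C * Fd * B * (Fd * C * Fd) = A := by
    rw [← hFF]
    simp only [mul_assoc]
    rw [csw (F * (Fd * (C * Fd))), c2 (C * Fd), cP Fd, ← mul_assoc C C Fd, hCC]
    simp only [mul_assoc]
    rw [csw (A * (F * Fd)), pAr (F * Fd), hAP]
  have htrA : (θsd * A).trace = (Fd * C * Fd * B).trace := by
    calc (θsd * A).trace = (θsd * (Fd * C * Fd * B * (Fd * C * Fd))).trace := by rw [hθBθ]
      _ = ((θsd * (Fd * C * Fd * B)) * (Fd * C * Fd)).trace := by simp only [mul_assoc]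
      _ = ((Fd * C * Fd) * (θsd * (Fd * C * Fd * B))).trace := trace_mul_comm _ _
      _ = ((Fd * C * Fd * θsd * (Fd * C * Fd)) * B).trace := by simp only [mul_assoc]
      _ = ((Fd * C * Fd) * B).trace := by rw [hmpθs.1]
  have hMM : (F * Ah) * (F * Ah)ᴴ = F * A * F := by
    rw [conjTranspose_mul, herm_c hAhpsd, herm_c hFpsd]
    calc (F * Ah) * (Ah * F) = F * ((Ah * Ah) * F) := by simp only [mul_assoc]
      _ = F * A * F := by rw [hAhAh, ← mul_assoc]
  have hCsq : C = (posSemidef_self_mul_conjTranspose (F * Ah)).sqrt :=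
    hCpsd.eq_sqrt_of_sq_eq (posSemidef_self_mul_conjTranspose (F * Ah))
      (by rw [pow_two, hCC, ← hMM])
  have hTN : traceNorm (F * Ah) = C.trace := by
    show (posSemidef_conjTranspose_mul_self (F * Ah)).sqrt.trace = C.trace
    rw [trace_sqrt_swap, ← hCsq]
  rw [htrA, htrB, hTN]
  ring

end Aux

/-- Let `A, B` be symmetric positive semidefinite with `Ran A ⊆ Ran B`.  Then the minimum of
`θ ↦ Tr(θ† A) + Tr(θ B)` over symmetric positive semidefinite `θ` with `Ran A ⊆ Ran θ`
equals `2‖B^{1/2} A^{1/2}‖_*`, attained at `θ* = B^{†/2} (B^{1/2} A B^{1/2})^{1/2} B^{†/2}`. -/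
theorem stmt1 {d : ℕ} (A B Bdag : Matrix (Fin d) (Fin d) ℝ)
    (hA : A.PosSemidef) (hB : B.PosSemidef)
    (hBdagMP : IsMoorePenrose B Bdag) (hBdag : Bdag.PosSemidef)
    (hRanAB : LinearMap.range A.mulVecLin ≤ LinearMap.range B.mulVecLin)
    (hMid : (hB.sqrt * A * hB.sqrt).PosSemidef) :
    (∀ θ θdag : Matrix (Fin d) (Fin d) ℝ, θ.PosSemidef → IsMoorePenrose θ θdag →
        LinearMap.range A.mulVecLin ≤ LinearMap.range θ.mulVecLin →
        2 * traceNorm (hB.sqrt * hA.sqrt) ≤ (θdag * A).trace + (θ * B).trace) ∧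
    (∀ θstardag : Matrix (Fin d) (Fin d) ℝ,
        IsMoorePenrose (hBdag.sqrt * hMid.sqrt * hBdag.sqrt) θstardag →
        (θstardag * A).trace + ((hBdag.sqrt * hMid.sqrt * hBdag.sqrt) * B).trace
          = 2 * traceNorm (hB.sqrt * hA.sqrt)) := by
  constructor
  · intro θ θdag hθ hθmp hRanAθ
    exact part1 hB.posSemidef_sqrt hA.posSemidef_sqrt hB.sqrt_mul_self hA.sqrt_mul_self
      hθ hθmp hRanAθ
  · intro θsd hmpθs
    obtain ⟨Fd, hFdpsd, hFmp, hFc⟩ := exists_pinv hB.posSemidef_sqrt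
    have hmpB : IsMoorePenrose B (Fd * Fd) := by
      rw [← hB.sqrt_mul_self]; exact mp_sq hFmp hFc
    have hBd : Bdag = Fd * Fd := mp_unique_s1 hBdagMP hmpB
    have hE : hBdag.sqrt = Fd :=
      (hFdpsd.eq_sqrt_of_sq_eq hBdag (by rw [pow_two]; exact hBd.symm)).symm
    rw [hE] at hmpθs ⊢
    exact part2 hB.posSemidef_sqrt hA.posSemidef_sqrt hMid.posSemidef_sqrt hA
      hB.sqrt_mul_self hA.sqrt_mul_self hMid.sqrt_mul_self hRanAB
      hFdpsd hFmp hFc hmpθs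
end
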